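/- Let (x₁, x₂, x₃, x₄) and (y₁, y₂, y₃, y₄) be solutions on [0, ∞) of the ODE system x₁' = x₂, x₂' = 4x₁ + x₃, x₃' = x₄, x₄' = 4x₁x₄, with y₄(0) > 0. Suppose xᵢ(0) ≥ yᵢ(0) for i = 1, 2, 3, 4. Then xᵢ(t) ≥ yᵢ(t) for all t > 0 and i = 1, 2, 3, 4. Moreover, if in addition x_j(0) > y_j(0) for some j, then xᵢ(t) > yᵢ(t) for all t > 0 and all i = 1, 2, 3, 4. -/

import Mathlib

open Filter

open Set Filter Topology

namespace MonoLemmaAux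

/-- negative part -/
noncomputable def np (a : ℝ) : ℝ := max (-a) 0

lemma np_nonneg (a : ℝ) : 0 ≤ np a := le_max_right _ _
lemma neg_le_np (a : ℝ) : -a ≤ np a := le_max_left _ _
lemma np_eq_zero {a : ℝ} (h : 0 ≤ a) : np a = 0 := max_eq_right (by linarith)
lemma nonneg_of_np_nonpos {a : ℝ} (h : np a ≤ 0) : 0 ≤ a := by
  have h1 := neg_le_np a; linarith
lemma np_add (a b : ℝ) : np (a + b) ≤ np a + np b :=
  max_le (by have := neg_le_np a; have := neg_le_np b; linarith)
    (by have := np_nonneg a; have := np_nonneg b; linarith)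
lemma np_le_abs (a : ℝ) : np a ≤ |a| := max_le (neg_le_abs a) (abs_nonneg a)
lemma np_of_nonpos {a : ℝ} (h : a ≤ 0) : np a = -a := max_eq_left (by linarith)

/-- antiderivative of a function continuous on `[0,∞)` -/
lemma exists_antideriv (g : ℝ → ℝ) (hg : ContinuousOn g (Ici 0)) :
    ∃ G : ℝ → ℝ, G 0 = 0 ∧ ∀ t ∈ Ici (0:ℝ), HasDerivAt G (g t) t := by
  have hcont : Continuous fun s => g (max s 0) :=
    hg.comp_continuous (continuous_id.max continuous_const) fun x => le_max_right x 0
  refine ⟨fun t => ∫ s in (0:ℝ)..t, g (max s 0), by simp, fun t ht => ?_⟩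
  have h := (hcont.integral_hasStrictDerivAt 0 t).hasDerivAt
  simpa [max_eq_left (mem_Ici.1 ht)] using h

lemma contOn {f g : ℝ → ℝ} (h : ∀ t ∈ Ici (0:ℝ), HasDerivWithinAt f (g t) (Ici 0) t) :
    ContinuousOn f (Ici 0) := fun t ht => (h t ht).continuousWithinAt

/-- positivity persists for solutions of `w' = c w` -/
lemma pos_of_linODE {c w : ℝ → ℝ} (hc : ContinuousOn c (Ici 0))
    (hw : ∀ t ∈ Ici (0:ℝ), HasDerivWithinAt w (c t * w t) (Ici 0) t)
    (h0 : 0 < w 0) : ∀ t ∈ Ici (0:ℝ), 0 < w t := by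
  obtain ⟨C, hC0, hC⟩ := exists_antideriv c hc
  set v : ℝ → ℝ := fun t => w t * Real.exp (-(C t)) with hv
  have hvd : ∀ t ∈ Ici (0:ℝ), HasDerivWithinAt v 0 (Ici 0) t := by
    intro t ht
    have h1 := (hw t ht).fun_mul (((hC t ht).fun_neg.exp).hasDerivWithinAt (s := Ici 0))
    refine h1.congr_deriv ?_
    ring
  intro b hb
  have hconst : v b = v 0 := by
    have := constant_of_has_deriv_right_zero (f := v) (a := 0) (b := b)
      ((contOn hvd).mono (Icc_subset_Ici_self))
      (fun x hx => (hvd x hx.1).mono (Ici_subset_Ici.2 hx.1))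
    exact this b ⟨hb, le_refl b⟩
  have hv0 : v 0 = w 0 := by simp [hv, hC0]
  have hvb : 0 < v b := by rw [hconst, hv0]; exact h0
  simp only [hv] at hvb
  nlinarith [Real.exp_pos (-(C b))]

lemma mono_Ici {z w : ℝ → ℝ} (h : ∀ t ∈ Ici (0:ℝ), HasDerivWithinAt z (w t) (Ici 0) t)
    (hw : ∀ t ∈ Ici (0:ℝ), 0 ≤ w t) : MonotoneOn z (Ici 0) := by
  apply monotoneOn_of_deriv_nonneg (convex_Ici 0) (contOn h)
  · intro t ht
    rw [interior_Ici] at ht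
    exact ((h t (Ioi_subset_Ici_self ht)).hasDerivAt (Ici_mem_nhds ht)).differentiableAt.differentiableWithinAt
  · intro t ht
    rw [interior_Ici] at ht
    rw [((h t (Ioi_subset_Ici_self ht)).hasDerivAt (Ici_mem_nhds ht)).deriv]
    exact hw t (Ioi_subset_Ici_self ht)

lemma strict_lt {z w : ℝ → ℝ} (h : ∀ t ∈ Ici (0:ℝ), HasDerivWithinAt z (w t) (Ici 0) t)
    {a b : ℝ} (ha : 0 ≤ a) (hab : a < b) (hw : ∀ t, a < t → t < b → 0 < w t) :
    z a < z b := by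
  have hs : StrictMonoOn z (Icc a b) := by
    apply strictMonoOn_of_deriv_pos (convex_Icc a b)
    · exact (contOn h).mono fun s hs => le_trans ha hs.1
    · intro t ht
      rw [interior_Icc] at ht
      have ht0 : (0:ℝ) < t := lt_of_le_of_lt ha ht.1
      rw [((h t ht0.le).hasDerivAt (Ici_mem_nhds ht0)).deriv]
      exact hw t ht.1 ht.2
  exact hs ⟨le_refl a, hab.le⟩ ⟨hab.le, le_refl b⟩ hab

/-- candidate right derivative of `np ∘ z` -/
noncomputable def npderiv (z : ℝ → ℝ) (d : ℝ) (x : ℝ) : ℝ :=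
  if z x < 0 then -d else if 0 < z x then 0 else max (-d) 0

lemma npderiv_le (z : ℝ → ℝ) (d x : ℝ) : npderiv z d x ≤ np d := by
  unfold npderiv np
  split_ifs
  · exact le_max_left _ _
  · exact le_max_right _ _
  · exact le_refl _

lemma npderiv_of_pos {z : ℝ → ℝ} {d x : ℝ} (h : 0 < z x) : npderiv z d x = 0 := by
  unfold npderiv
  rw [if_neg (by linarith), if_pos h]

lemma tendsto_slope_np {z : ℝ → ℝ} {d x : ℝ} (hz : HasDerivWithinAt z d (Ici x) x) :
    Tendsto (fun t => (t - x)⁻¹ * (np (z t) - np (z x))) (𝓝[>] x) (𝓝 (npderiv z d x)) := by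
  have hs : Tendsto (fun t => (t - x)⁻¹ * (z t - z x)) (𝓝[>] x) (𝓝 d) := by
    have h1 := hasDerivWithinAt_iff_tendsto_slope.1 hz
    rw [Set.Ici_sdiff_left] at h1
    exact h1.congr fun t => by rw [slope_def_field]; ring
  have hmem : ∀ᶠ t in 𝓝[>] x, t ∈ Ioi x := eventually_mem_nhdsWithin
  have hle : 𝓝[>] x ≤ 𝓝[Ici x] x := nhdsWithin_mono x Ioi_subset_Ici_self
  rcases lt_trichotomy (z x) 0 with hneg | hzero | hpos
  · rw [npderiv, if_pos hneg]
    have hev : ∀ᶠ t in 𝓝[>] x, z t < 0 :=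
      (hz.continuousWithinAt.eventually_lt_const hneg).filter_mono hle
    refine hs.neg.congr' ?_
    filter_upwards [hev] with t ht
    rw [np, np, max_eq_left (by linarith : (0:ℝ) ≤ -z t),
      max_eq_left (by linarith : (0:ℝ) ≤ -z x)]
    ring
  · rw [npderiv, if_neg (by rw [hzero]; exact lt_irrefl 0), if_neg (by rw [hzero]; exact lt_irrefl 0)]
    have hmax : Tendsto (fun t => max (-((t - x)⁻¹ * (z t - z x))) 0) (𝓝[>] x) (𝓝 (max (-d) 0)) :=
      hs.neg.max tendsto_const_nhds
    refine hmax.congr' ?_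
    filter_upwards [hmem] with t ht
    have htx : 0 < t - x := sub_pos.2 ht
    rw [np, np, hzero, neg_zero, max_self, sub_zero, sub_zero,
      mul_max_of_nonneg _ _ (inv_nonneg.2 htx.le), mul_zero, mul_neg]
  · rw [npderiv, if_neg (by linarith), if_pos hpos]
    have hev : ∀ᶠ t in 𝓝[>] x, 0 < z t :=
      (hz.continuousWithinAt.eventually_const_lt hpos).filter_mono hle
    refine tendsto_const_nhds.congr' ?_
    filter_upwards [hev] with t ht
    rw [np, np, max_eq_right (by linarith), max_eq_right (by linarith), sub_zero, mul_zero]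

lemma np_smul {c : ℝ} (hc : 0 ≤ c) (a : ℝ) : np (c * a) = c * np a := by
  rw [np, np, mul_max_of_nonneg _ _ hc, mul_neg, mul_zero]

lemma core_nonneg {z₁ z₂ z₃ z₄ X Y : ℝ → ℝ}
    (hz₁ : ∀ t ∈ Ici (0:ℝ), HasDerivWithinAt z₁ (z₂ t) (Ici 0) t)
    (hz₂ : ∀ t ∈ Ici (0:ℝ), HasDerivWithinAt z₂ (4 * z₁ t + z₃ t) (Ici 0) t)
    (hz₃ : ∀ t ∈ Ici (0:ℝ), HasDerivWithinAt z₃ (z₄ t) (Ici 0) t)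
    (hz₄ : ∀ t ∈ Ici (0:ℝ), HasDerivWithinAt z₄ (4 * X t * z₄ t + 4 * z₁ t * Y t) (Ici 0) t)
    (hXc : ContinuousOn X (Ici 0)) (hYc : ContinuousOn Y (Ici 0))
    (hY : ∀ t ∈ Ici (0:ℝ), 0 ≤ Y t)
    (h1 : 0 ≤ z₁ 0) (h2 : 0 ≤ z₂ 0) (h3 : 0 ≤ z₃ 0) (h4 : 0 ≤ z₄ 0) :
    ∀ t ∈ Ici (0:ℝ), 0 ≤ z₁ t ∧ 0 ≤ z₂ t ∧ 0 ≤ z₃ t ∧ 0 ≤ z₄ t := by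
  intro b hb
  obtain ⟨M0, hM0⟩ := (isCompact_Icc (a := (0:ℝ)) (b := b)).exists_bound_of_continuousOn
      ((hXc.mono Icc_subset_Ici_self).abs.add (hYc.mono Icc_subset_Ici_self))
  set M := max M0 0 with hM
  have hMnn : (0:ℝ) ≤ M := le_max_right _ _
  have hbounds : ∀ s ∈ Icc (0:ℝ) b, |X s| ≤ M ∧ Y s ≤ M := by
    intro s hs
    have hYs : 0 ≤ Y s := hY s (Icc_subset_Ici_self hs)
    have habs : |X s| + Y s ≤ M0 := by
      have h := hM0 s hs
      simp only [Real.norm_eq_abs, Pi.add_apply] at h; rwa [abs_of_nonneg (add_nonneg (abs_nonneg (X s)) hYs)] at h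
    constructor
    · calc |X s| ≤ M0 := by linarith
        _ ≤ M := le_max_left _ _
    · calc Y s ≤ M0 := by linarith [abs_nonneg (X s)]
        _ ≤ M := le_max_left _ _
  set F : ℝ → ℝ := fun s => np (z₁ s) + np (z₂ s) + np (z₃ s) + np (z₄ s) with hF
  set F' : ℝ → ℝ := fun s => npderiv z₁ (z₂ s) s + npderiv z₂ (4 * z₁ s + z₃ s) s
      + npderiv z₃ (z₄ s) s + npderiv z₄ (4 * X s * z₄ s + 4 * z₁ s * Y s) s with hF'
  set K : ℝ := 5 + 8 * M with hK
  have cnp : ∀ {f g : ℝ → ℝ}, (∀ t ∈ Ici (0:ℝ), HasDerivWithinAt f (g t) (Ici 0) t) →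
      ContinuousOn (fun s => np (f s)) (Icc (0:ℝ) b) := by
    intro f g h
    exact ((contOn h).mono Icc_subset_Ici_self).neg.sup continuousOn_const
  have hFc : ContinuousOn F (Icc (0:ℝ) b) :=
    (((cnp hz₁).add (cnp hz₂)).add (cnp hz₃)).add (cnp hz₄)
  have hf' : ∀ s ∈ Ico (0:ℝ) b, ∀ r, F' s < r →
      ∃ᶠ t in 𝓝[>] s, (t - s)⁻¹ * (F t - F s) < r := by
    intro s hs r hr
    have hs0 : (0:ℝ) ≤ s := hs.1
    have hsub : Ici s ⊆ Ici (0:ℝ) := Ici_subset_Ici.2 hs0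
    have T1 := tendsto_slope_np ((hz₁ s hs0).mono hsub)
    have T2 := tendsto_slope_np ((hz₂ s hs0).mono hsub)
    have T3 := tendsto_slope_np ((hz₃ s hs0).mono hsub)
    have T4 := tendsto_slope_np ((hz₄ s hs0).mono hsub)
    have Tsum : Tendsto (fun t => (t - s)⁻¹ * (F t - F s)) (𝓝[>] s) (𝓝 (F' s)) := by
      refine (((T1.add T2).add T3).add T4).congr fun t => ?_
      simp only [hF]
      ring
    exact (Tsum.eventually_lt_const hr).frequently
  have bound : ∀ s ∈ Ico (0:ℝ) b, F' s ≤ K * F s + 0 := by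
    intro s hs
    obtain ⟨hXs, hYs⟩ := hbounds s ⟨hs.1, hs.2.le⟩
    have hYnn : 0 ≤ Y s := hY s hs.1
    have n1 := np_nonneg (z₁ s); have n2 := np_nonneg (z₂ s)
    have n3 := np_nonneg (z₃ s); have n4 := np_nonneg (z₄ s)
    have b1 : npderiv z₁ (z₂ s) s ≤ np (z₂ s) := npderiv_le _ _ _
    have b2 : npderiv z₂ (4 * z₁ s + z₃ s) s ≤ 4 * np (z₁ s) + np (z₃ s) := by
      refine le_trans (npderiv_le _ _ _) (le_trans (np_add _ _) ?_)
      rw [np_smul (by norm_num : (0:ℝ) ≤ 4)]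
    have b3 : npderiv z₃ (z₄ s) s ≤ np (z₄ s) := npderiv_le _ _ _
    have b4 : npderiv z₄ (4 * X s * z₄ s + 4 * z₁ s * Y s) s
        ≤ 4 * M * np (z₄ s) + 4 * M * np (z₁ s) := by
      by_cases hp : 0 < z₄ s
      · rw [npderiv_of_pos hp]
        positivity
      · push_neg at hp
        refine le_trans (npderiv_le _ _ _) (le_trans (np_add _ _) ?_)
        have c1 : np (4 * X s * z₄ s) ≤ 4 * M * np (z₄ s) := by
          refine le_trans (np_le_abs _) ?_
          rw [abs_mul, abs_mul, np_of_nonpos hp, abs_of_nonpos hp]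
          have h4' : |(4:ℝ)| = 4 := by norm_num
          rw [h4']
          nlinarith [abs_nonneg (X s), neg_nonneg.2 hp]
        have c2 : np (4 * z₁ s * Y s) ≤ 4 * M * np (z₁ s) := by
          refine max_le ?_ (by positivity)
          have hz1 : -z₁ s ≤ np (z₁ s) := neg_le_np _
          nlinarith
        linarith
    have hFs : F s = np (z₁ s) + np (z₂ s) + np (z₃ s) + np (z₄ s) := rfl
    have hF's : F' s = npderiv z₁ (z₂ s) s + npderiv z₂ (4 * z₁ s + z₃ s) s
      + npderiv z₃ (z₄ s) s + npderiv z₄ (4 * X s * z₄ s + 4 * z₁ s * Y s) s := rfl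
    rw [hFs, hF's, hK]
    nlinarith
  have hF0 : F 0 ≤ 0 := by
    simp [hF, np_eq_zero h1, np_eq_zero h2, np_eq_zero h3, np_eq_zero h4]
  have hG := le_gronwallBound_of_liminf_deriv_right_le (δ := 0) (ε := 0) (K := K) hFc hf'
      hF0 bound b (mem_Icc.2 ⟨hb, le_refl b⟩)
  rw [sub_zero, gronwallBound_ε0_δ0] at hG
  have n1 := np_nonneg (z₁ b); have n2 := np_nonneg (z₂ b)
  have n3 := np_nonneg (z₃ b); have n4 := np_nonneg (z₄ b)
  have hFb : F b = np (z₁ b) + np (z₂ b) + np (z₃ b) + np (z₄ b) := rfl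
  rw [hFb] at hG
  exact ⟨nonneg_of_np_nonpos (by linarith), nonneg_of_np_nonpos (by linarith),
    nonneg_of_np_nonpos (by linarith), nonneg_of_np_nonpos (by linarith)⟩

lemma core_strict {z₁ z₂ z₃ z₄ X Y : ℝ → ℝ}
    (hz₁ : ∀ t ∈ Ici (0:ℝ), HasDerivWithinAt z₁ (z₂ t) (Ici 0) t)
    (hz₂ : ∀ t ∈ Ici (0:ℝ), HasDerivWithinAt z₂ (4 * z₁ t + z₃ t) (Ici 0) t)
    (hz₃ : ∀ t ∈ Ici (0:ℝ), HasDerivWithinAt z₃ (z₄ t) (Ici 0) t)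
    (hz₄ : ∀ t ∈ Ici (0:ℝ), HasDerivWithinAt z₄ (4 * X t * z₄ t + 4 * z₁ t * Y t) (Ici 0) t)
    (hXc : ContinuousOn X (Ici 0))
    (hY : ∀ t ∈ Ici (0:ℝ), 0 < Y t)
    (hnn : ∀ t ∈ Ici (0:ℝ), 0 ≤ z₁ t ∧ 0 ≤ z₂ t ∧ 0 ≤ z₃ t ∧ 0 ≤ z₄ t)
    (hj : 0 < z₁ 0 ∨ 0 < z₂ 0 ∨ 0 < z₃ 0 ∨ 0 < z₄ 0) :
    ∀ t, 0 < t → 0 < z₁ t ∧ 0 < z₂ t ∧ 0 < z₃ t ∧ 0 < z₄ t := by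
  obtain ⟨C, hC0, hC⟩ := exists_antideriv (fun t => 4 * X t) (continuousOn_const.mul hXc)
  set W : ℝ → ℝ := fun t => z₄ t * Real.exp (-(C t)) with hWdef
  have hW : ∀ t ∈ Ici (0:ℝ),
      HasDerivWithinAt W (4 * z₁ t * Y t * Real.exp (-(C t))) (Ici 0) t := by
    intro t ht
    have h1 := (hz₄ t ht).fun_mul (((hC t ht).fun_neg.exp).hasDerivWithinAt (s := Ici 0))
    refine h1.congr_deriv ?_
    ring
  have hWnn : ∀ t ∈ Ici (0:ℝ), 0 ≤ 4 * z₁ t * Y t * Real.exp (-(C t)) := by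
    intro t ht
    have h1 := (hnn t ht).1
    have h2 := (hY t ht).le
    positivity
  have monoW : MonotoneOn W (Ici 0) := mono_Ici hW hWnn
  have z4_of_W : ∀ t, 0 < W t → 0 < z₄ t := by
    intro t hWt
    have h' : 0 < z₄ t * Real.exp (-(C t)) := hWt
    nlinarith [Real.exp_pos (-(C t))]
  have hW0 : 0 ≤ W 0 := mul_nonneg (hnn 0 self_mem_Ici).2.2.2 (Real.exp_pos _).le
  have S4 : (∀ t, 0 < t → 0 < z₁ t) → ∀ t, 0 < t → 0 < z₄ t := by
    intro h1 t ht
    have hlt : W 0 < W t := by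
      refine strict_lt hW (le_refl 0) ht fun s hs _ => ?_
      have ha := h1 s hs
      have hb := hY s hs.le
      positivity
    exact z4_of_W t (lt_of_le_of_lt hW0 hlt)
  have S3 : (∀ t, 0 < t → 0 < z₄ t) → ∀ t, 0 < t → 0 < z₃ t := by
    intro h t ht
    have := strict_lt hz₃ (le_refl 0) ht fun s hs _ => h s hs
    linarith [(hnn 0 self_mem_Ici).2.2.1]
  have S2 : (∀ t, 0 < t → 0 < z₃ t) → ∀ t, 0 < t → 0 < z₂ t := by
    intro h t ht
    have := strict_lt hz₂ (le_refl 0) ht fun s hs _ => by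
      have h1 := (hnn s hs.le).1
      have h2 := h s hs
      linarith
    linarith [(hnn 0 self_mem_Ici).2.1]
  have S1 : (∀ t, 0 < t → 0 < z₂ t) → ∀ t, 0 < t → 0 < z₁ t := by
    intro h t ht
    have := strict_lt hz₁ (le_refl 0) ht fun s hs _ => h s hs
    linarith [(hnn 0 self_mem_Ici).1]
  have mono1 : MonotoneOn z₁ (Ici 0) := mono_Ici hz₁ fun t ht => (hnn t ht).2.1
  have mono2 : MonotoneOn z₂ (Ici 0) := mono_Ici hz₂ fun t ht => by
    have h1 := (hnn t ht).1; have h2 := (hnn t ht).2.2.1; linarith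
  have mono3 : MonotoneOn z₃ (Ici 0) := mono_Ici hz₃ fun t ht => (hnn t ht).2.2.2
  rcases hj with hj | hj | hj | hj
  · have h1 : ∀ t, 0 < t → 0 < z₁ t := fun t ht =>
      lt_of_lt_of_le hj (mono1 self_mem_Ici ht.le ht.le)
    have h4 := S4 h1
    have h3 := S3 h4
    have h2 := S2 h3
    exact fun t ht => ⟨h1 t ht, h2 t ht, h3 t ht, h4 t ht⟩
  · have h2 : ∀ t, 0 < t → 0 < z₂ t := fun t ht =>
      lt_of_lt_of_le hj (mono2 self_mem_Ici ht.le ht.le)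
    have h1 := S1 h2
    have h4 := S4 h1
    have h3 := S3 h4
    exact fun t ht => ⟨h1 t ht, h2 t ht, h3 t ht, h4 t ht⟩
  · have h3 : ∀ t, 0 < t → 0 < z₃ t := fun t ht =>
      lt_of_lt_of_le hj (mono3 self_mem_Ici ht.le ht.le)
    have h2 := S2 h3
    have h1 := S1 h2
    have h4 := S4 h1
    exact fun t ht => ⟨h1 t ht, h2 t ht, h3 t ht, h4 t ht⟩
  · have hW0' : 0 < W 0 := mul_pos hj (Real.exp_pos _)
    have h4 : ∀ t, 0 < t → 0 < z₄ t := fun t ht =>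
      z4_of_W t (lt_of_lt_of_le hW0' (monoW self_mem_Ici ht.le ht.le))
    have h3 := S3 h4
    have h2 := S2 h3
    have h1 := S1 h2
    exact fun t ht => ⟨h1 t ht, h2 t ht, h3 t ht, h4 t ht⟩

end MonoLemmaAux

open MonoLemmaAux in
/-- Monotonicity lemma for the ODE system `x₁' = x₂`, `x₂' = 4x₁ + x₃`, `x₃' = x₄`,
`x₄' = 4x₁x₄` on `[0, ∞)`: if two solutions `x` and `y` satisfy `y₄(0) > 0` and
`xᵢ(0) ≥ yᵢ(0)` for all `i`, then `xᵢ(t) ≥ yᵢ(t)` for all `t > 0`; moreover if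
`x_j(0) > y_j(0)` for some `j`, then `xᵢ(t) > yᵢ(t)` for all `t > 0` and all `i`. -/
theorem monotonicity_lemma (x₁ x₂ x₃ x₄ y₁ y₂ y₃ y₄ : ℝ → ℝ)
    (hx₁ : ∀ t ∈ Set.Ici (0 : ℝ), HasDerivWithinAt x₁ (x₂ t) (Set.Ici 0) t)
    (hx₂ : ∀ t ∈ Set.Ici (0 : ℝ), HasDerivWithinAt x₂ (4 * x₁ t + x₃ t) (Set.Ici 0) t)
    (hx₃ : ∀ t ∈ Set.Ici (0 : ℝ), HasDerivWithinAt x₃ (x₄ t) (Set.Ici 0) t)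
    (hx₄ : ∀ t ∈ Set.Ici (0 : ℝ), HasDerivWithinAt x₄ (4 * x₁ t * x₄ t) (Set.Ici 0) t)
    (hy₁ : ∀ t ∈ Set.Ici (0 : ℝ), HasDerivWithinAt y₁ (y₂ t) (Set.Ici 0) t)
    (hy₂ : ∀ t ∈ Set.Ici (0 : ℝ), HasDerivWithinAt y₂ (4 * y₁ t + y₃ t) (Set.Ici 0) t)
    (hy₃ : ∀ t ∈ Set.Ici (0 : ℝ), HasDerivWithinAt y₃ (y₄ t) (Set.Ici 0) t)
    (hy₄ : ∀ t ∈ Set.Ici (0 : ℝ), HasDerivWithinAt y₄ (4 * y₁ t * y₄ t) (Set.Ici 0) t)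
    (hy₄0 : 0 < y₄ 0)
    (h₁ : y₁ 0 ≤ x₁ 0) (h₂ : y₂ 0 ≤ x₂ 0) (h₃ : y₃ 0 ≤ x₃ 0) (h₄ : y₄ 0 ≤ x₄ 0) :
    (∀ t > (0 : ℝ), y₁ t ≤ x₁ t ∧ y₂ t ≤ x₂ t ∧ y₃ t ≤ x₃ t ∧ y₄ t ≤ x₄ t) ∧
    ((y₁ 0 < x₁ 0 ∨ y₂ 0 < x₂ 0 ∨ y₃ 0 < x₃ 0 ∨ y₄ 0 < x₄ 0) →
      ∀ t > (0 : ℝ), y₁ t < x₁ t ∧ y₂ t < x₂ t ∧ y₃ t < x₃ t ∧ y₄ t < x₄ t) := by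
  have hy₄pos : ∀ t ∈ Ici (0:ℝ), 0 < y₄ t :=
    pos_of_linODE (c := fun t => 4 * y₁ t)
      (continuousOn_const.mul (contOn hy₁)) (fun t ht => hy₄ t ht) hy₄0
  have hz₁ : ∀ t ∈ Ici (0:ℝ),
      HasDerivWithinAt (fun t => x₁ t - y₁ t) (x₂ t - y₂ t) (Ici 0) t :=
    fun t ht => (hx₁ t ht).sub (hy₁ t ht)
  have hz₂ : ∀ t ∈ Ici (0:ℝ),
      HasDerivWithinAt (fun t => x₂ t - y₂ t)
        (4 * (x₁ t - y₁ t) + (x₃ t - y₃ t)) (Ici 0) t := by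
    intro t ht
    have h := (hx₂ t ht).fun_sub (hy₂ t ht)
    refine h.congr_deriv ?_
    ring
  have hz₃ : ∀ t ∈ Ici (0:ℝ),
      HasDerivWithinAt (fun t => x₃ t - y₃ t) (x₄ t - y₄ t) (Ici 0) t :=
    fun t ht => (hx₃ t ht).sub (hy₃ t ht)
  have hz₄ : ∀ t ∈ Ici (0:ℝ),
      HasDerivWithinAt (fun t => x₄ t - y₄ t)
        (4 * x₁ t * (x₄ t - y₄ t) + 4 * (x₁ t - y₁ t) * y₄ t) (Ici 0) t := by
    intro t ht
    have h := (hx₄ t ht).fun_sub (hy₄ t ht)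
    refine h.congr_deriv ?_
    ring
  have hnn := core_nonneg hz₁ hz₂ hz₃ hz₄ (contOn hx₁) (contOn hy₄)
    (fun t ht => (hy₄pos t ht).le)
    (by simpa using sub_nonneg.mpr h₁) (by simpa using sub_nonneg.mpr h₂)
    (by simpa using sub_nonneg.mpr h₃) (by simpa using sub_nonneg.mpr h₄)
  constructor
  · intro t ht
    obtain ⟨a1, a2, a3, a4⟩ := hnn t ht.le
    exact ⟨sub_nonneg.mp a1, sub_nonneg.mp a2, sub_nonneg.mp a3, sub_nonneg.mp a4⟩
  · intro hj t ht
    have hj' : 0 < x₁ 0 - y₁ 0 ∨ 0 < x₂ 0 - y₂ 0 ∨ 0 < x₃ 0 - y₃ 0 ∨ 0 < x₄ 0 - y₄ 0 := by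
      rcases hj with h | h | h | h
      · exact Or.inl (sub_pos.mpr h)
      · exact Or.inr (Or.inl (sub_pos.mpr h))
      · exact Or.inr (Or.inr (Or.inl (sub_pos.mpr h)))
      · exact Or.inr (Or.inr (Or.inr (sub_pos.mpr h)))
    obtain ⟨a1, a2, a3, a4⟩ :=
      core_strict hz₁ hz₂ hz₃ hz₄ (contOn hx₁) hy₄pos hnn hj' t ht
    exact ⟨sub_pos.mp a1, sub_pos.mp a2, sub_pos.mp a3, sub_pos.mp a4⟩
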